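/- If two end-components E₁ = (S₁, A₁) and E₂ = (S₂, A₂) of a finite MDP satisfy S₁ ∩ S₂ ≠ ∅, then (S₁ ∪ S₂, A₁ ∪ A₂) is also an end-component. -/

import Mathlib

variable {S Act : Type*}

/-- Edge relation of a sub-MDP (S', A'): s → s' if some enabled action of s in
the sub-MDP moves to s' with positive probability. -/
def SubEdge (T : S → Act → S → ℝ) (S' : Set S) (A' : S → Set Act) (s s' : S) : Prop :=
  s ∈ S' ∧ ∃ a ∈ A' s, 0 < T s a s'

/-- An end-component of an MDP with transition probabilities T: a nonempty
sub-MDP (S', A') with nonempty action sets, closed under probabilistic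
transitions, whose transition graph is strongly connected. -/
def IsEC (T : S → Act → S → ℝ) (S' : Set S) (A' : S → Set Act) : Prop :=
  S'.Nonempty ∧
  (∀ s ∈ S', (A' s).Nonempty) ∧
  (∀ s ∈ S', ∀ a ∈ A' s, ∀ s', 0 < T s a s' → s' ∈ S') ∧
  (∀ s ∈ S', ∀ s' ∈ S', Relation.ReflTransGen (SubEdge T S' A') s s')

lemma subEdge_mono_left (T : S → Act → S → ℝ) (S₁ S₂ : Set S) (A₁ A₂ : S → Set Act)
    {s s' : S} (h : SubEdge T S₁ A₁ s s') :
    SubEdge T (S₁ ∪ S₂) (fun s => A₁ s ∪ A₂ s) s s' := by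
  obtain ⟨hs, a, ha, hT⟩ := h
  exact ⟨Or.inl hs, a, Or.inl ha, hT⟩

lemma subEdge_mono_right (T : S → Act → S → ℝ) (S₁ S₂ : Set S) (A₁ A₂ : S → Set Act)
    {s s' : S} (h : SubEdge T S₂ A₂ s s') :
    SubEdge T (S₁ ∪ S₂) (fun s => A₁ s ∪ A₂ s) s s' := by
  obtain ⟨hs, a, ha, hT⟩ := h
  exact ⟨Or.inr hs, a, Or.inr ha, hT⟩

/-- if two end-components share a state, their (pointwise) union
is an end-component.  (Action maps are assumed empty outside their state sets.) -/
theorem union_of_overlapping_ECs_is_EC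
    (T : S → Act → S → ℝ)
    (S₁ S₂ : Set S) (A₁ A₂ : S → Set Act)
    (hout₁ : ∀ s ∉ S₁, A₁ s = ∅) (hout₂ : ∀ s ∉ S₂, A₂ s = ∅)
    (h₁ : IsEC T S₁ A₁) (h₂ : IsEC T S₂ A₂)
    (hmeet : (S₁ ∩ S₂).Nonempty) :
    IsEC T (S₁ ∪ S₂) (fun s => A₁ s ∪ A₂ s) := by
  obtain ⟨hne₁, hact₁, hclosed₁, hconn₁⟩ := h₁
  obtain ⟨hne₂, hact₂, hclosed₂, hconn₂⟩ := h₂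
  obtain ⟨m, hm₁, hm₂⟩ := hmeet
  refine ⟨hne₁.mono Set.subset_union_left, ?_, ?_, ?_⟩
  · rintro s (hs | hs)
    · exact ((hact₁ s hs).mono Set.subset_union_left)
    · exact ((hact₂ s hs).mono Set.subset_union_right)
  · rintro s hs a (ha | ha) s' hT
    · by_cases h : s ∈ S₁
      · exact Or.inl (hclosed₁ s h a ha s' hT)
      · simp [hout₁ s h] at ha
    · by_cases h : s ∈ S₂
      · exact Or.inr (hclosed₂ s h a ha s' hT)
      · simp [hout₂ s h] at ha
  · have lift₁ : ∀ {x y}, x ∈ S₁ → y ∈ S₁ →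
        Relation.ReflTransGen (SubEdge T (S₁ ∪ S₂) fun s => A₁ s ∪ A₂ s) x y := by
      intro x y hx hy
      exact Relation.ReflTransGen.mono (fun _ _ h => subEdge_mono_left T S₁ S₂ A₁ A₂ h) _ _ (hconn₁ x hx y hy)
    have lift₂ : ∀ {x y}, x ∈ S₂ → y ∈ S₂ →
        Relation.ReflTransGen (SubEdge T (S₁ ∪ S₂) fun s => A₁ s ∪ A₂ s) x y := by
      intro x y hx hy
      exact Relation.ReflTransGen.mono (fun _ _ h => subEdge_mono_right T S₁ S₂ A₁ A₂ h) _ _ (hconn₂ x hx y hy)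
    rintro s (hs | hs) s' (hs' | hs')
    · exact lift₁ hs hs'
    · exact (lift₁ hs hm₁).trans (lift₂ hm₂ hs')
    · exact (lift₂ hs hm₂).trans (lift₁ hm₁ hs')
    · exact lift₂ hs hs'
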